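/- arXiv:2406.03632 — 3 statements merged into one kernel-verified Lean document; each statement's English description precedes it below -/
import Mathlib

section
/- The greedy matching algorithm (matching each vertex when its left endpoint is processed) and the delayed greedy matching algorithm (matching each vertex v_j to the free vertex v_i of smallest index i among processed-but-unmatched neighbours, when v_j is processed) produce the same matching on any graph with any fixed vertex order. -/
namespace Paper

/-- Has vertex `v` already been matched by the edge list `M`? -/
def matchedB {n : ℕ} (M : List (Fin n × Fin n)) (v : Fin n) : Bool :=
  M.any fun e => e.1 = v || e.2 = v

/-- One step of the greedy matching algorithm: process vertex `i`; if it is unmatched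
and has an unmatched neighbour, match it to the unmatched neighbour of smallest index. -/
def greedyStep {n : ℕ} (G : SimpleGraph (Fin n)) [DecidableRel G.Adj]
    (M : List (Fin n × Fin n)) (i : Fin n) : List (Fin n × Fin n) :=
  if matchedB M i then M
  else
    if h : (Finset.univ.filter fun j => G.Adj i j ∧ matchedB M j = false).Nonempty then
      (i, (Finset.univ.filter fun j => G.Adj i j ∧ matchedB M j = false).min' h) :: M
    else M

/-- The greedy matching algorithm, processing the vertices `v_1, …, v_n` in order. -/
def greedy {n : ℕ} (G : SimpleGraph (Fin n)) [DecidableRel G.Adj] : List (Fin n × Fin n) :=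
  (List.finRange n).foldl (greedyStep G) []

/-- The partial matching produced by the greedy algorithm after processing the
first `k` vertices. -/
def greedyPrefix {n : ℕ} (G : SimpleGraph (Fin n)) [DecidableRel G.Adj] (k : ℕ) :
    List (Fin n × Fin n) :=
  ((List.finRange n).take k).foldl (greedyStep G) []

/-- One step of the delayed greedy algorithm: state is (matching, free set `F`);
when processing `j`, if `j` has a neighbour in `F`, match `j` to the smallest-index
such neighbour and remove it from `F`; otherwise add `j` to `F`. -/
def delayedStep {n : ℕ} (G : SimpleGraph (Fin n)) [DecidableRel G.Adj]
    (s : List (Fin n × Fin n) × Finset (Fin n)) (j : Fin n) :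
    List (Fin n × Fin n) × Finset (Fin n) :=
  if h : (s.2.filter fun i => G.Adj i j).Nonempty then
    (((s.2.filter fun i => G.Adj i j).min' h, j) :: s.1,
      s.2.erase ((s.2.filter fun i => G.Adj i j).min' h))
  else (s.1, insert j s.2)

/-- The delayed greedy matching algorithm. -/
def delayedGreedy {n : ℕ} (G : SimpleGraph (Fin n)) [DecidableRel G.Adj] :
    List (Fin n × Fin n) :=
  ((List.finRange n).foldl (delayedStep G) ([], ∅)).1

/-- `M` is a matching of `G`: its members are edges of `G` and are pairwise
vertex-disjoint. -/
def IsMatchingL {n : ℕ} (G : SimpleGraph (Fin n)) (M : List (Fin n × Fin n)) : Prop :=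
  (∀ e ∈ M, G.Adj e.1 e.2) ∧
    ∀ e ∈ M, ∀ f ∈ M, e ≠ f → e.1 ≠ f.1 ∧ e.1 ≠ f.2 ∧ e.2 ≠ f.1 ∧ e.2 ≠ f.2

/-- A finite rooted tree on node set `Fin N`, given by a parent function and a
depth function (distance to the root). -/
structure RootedTree (N : ℕ) where
  parent : Fin N → Fin N
  root : Fin N
  depth : Fin N → ℕ
  depth_root : depth root = 0
  parent_root : parent root = root
  depth_parent : ∀ i, i ≠ root → depth (parent i) + 1 = depth i

/-- `T.Anc u w` : node `u` is an ancestor (possibly equal) of node `w`. -/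
def RootedTree.Anc {N : ℕ} (T : RootedTree N) (u w : Fin N) : Prop :=
  ∃ k : ℕ, T.parent^[k] w = u

/-- A node is a leaf if it has no children. -/
def RootedTree.IsLeaf {N : ℕ} (T : RootedTree N) (u : Fin N) : Prop :=
  ∀ w, T.parent w = u → w = u

/-- The data of an RDV representation: a rooted host tree `T` and, for each vertex `v`,
a downward path `P(v)` going from its top node `t v` down to its bottom node `b v`. -/
structure RDVData (N n : ℕ) where
  T : RootedTree N
  t : Fin n → Fin N
  b : Fin n → Fin N
  downward : ∀ v, T.Anc (t v) (b v)

/-- The node `u` lies on the downward path `P(v)`. -/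
def RDVData.onPath {N n : ℕ} (R : RDVData N n) (v : Fin n) (u : Fin N) : Prop :=
  R.T.Anc (R.t v) u ∧ R.T.Anc u (R.b v)

/-- `R` is an RDV representation of `G`: distinct vertices are adjacent iff their
downward paths share a node. -/
def RDVData.IsRep {N n : ℕ} (R : RDVData N n) (G : SimpleGraph (Fin n)) : Prop :=
  ∀ u w : Fin n, u ≠ w → (G.Adj u w ↔ ∃ node, R.onPath u node ∧ R.onPath w node)

/-- The identity enumeration `v_1, …, v_n` (i.e. the order on `Fin n`) is a bottom-up
enumeration: vertices are sorted by decreasing depth of the top node `t v`. -/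
def RDVData.BottomUp {N n : ℕ} (R : RDVData N n) : Prop :=
  ∀ i j : Fin n, i ≤ j → R.T.depth (R.t j) ≤ R.T.depth (R.t i)

/-- A planar (left-to-right) coordinate structure on a rooted tree: an injective
index on the leaves so that the leaf descendants of every node occupy a contiguous
range of indices, together with the leftmost leaf descendant `lmost` and rightmost
leaf descendant `rmost` of every node. -/
structure PlanarCoords {N : ℕ} (T : RootedTree N) where
  idx : Fin N → ℕ
  lmost : Fin N → Fin N
  rmost : Fin N → Fin N
  idx_inj : ∀ u w, T.IsLeaf u → T.IsLeaf w → idx u = idx w → u = w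
  lmost_leaf : ∀ u, T.IsLeaf (lmost u)
  lmost_desc : ∀ u, T.Anc u (lmost u)
  lmost_min : ∀ u lf, T.IsLeaf lf → T.Anc u lf → idx (lmost u) ≤ idx lf
  rmost_leaf : ∀ u, T.IsLeaf (rmost u)
  rmost_desc : ∀ u, T.Anc u (rmost u)
  rmost_max : ∀ u lf, T.IsLeaf lf → T.Anc u lf → idx lf ≤ idx (rmost u)
  contiguous : ∀ u lf lf' lf'', T.IsLeaf lf → T.IsLeaf lf' → T.IsLeaf lf'' →
    T.Anc u lf → T.Anc u lf' → idx lf ≤ idx lf'' → idx lf'' ≤ idx lf' → T.Anc u lf''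

/-- The x-coordinate of a node: the index of its leftmost leaf descendant. -/
def PlanarCoords.x {N : ℕ} {T : RootedTree N} (P : PlanarCoords T) (u : Fin N) : ℕ :=
  P.idx (P.lmost u)

/-- The closed neighbourhood `N[v]`. -/
def closedNbr {n : ℕ} (G : SimpleGraph (Fin n)) (v : Fin n) : Set (Fin n) :=
  insert v {w | G.Adj v w}

/-- `v` is a simple vertex: `N[v]` is a clique that can be ordered
`w_1, …, w_k` with `N[w_1] ⊆ N[w_2] ⊆ … ⊆ N[w_k]`. -/
def IsSimpleVx {n : ℕ} (G : SimpleGraph (Fin n)) (v : Fin n) : Prop :=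
  G.IsClique (closedNbr G v) ∧
    ∃ l : List (Fin n), (∀ w, w ∈ l ↔ w ∈ closedNbr G v) ∧
      l.Chain' fun a b => closedNbr G a ⊆ closedNbr G b

/-- The subgraph of `G` induced by the tail vertices `{v_i, …, v_n}`. -/
def tailGraph {n : ℕ} (G : SimpleGraph (Fin n)) (i : Fin n) : SimpleGraph (Fin n) where
  Adj a b := G.Adj a b ∧ i ≤ a ∧ i ≤ b
  symm := ⟨fun a b h => ⟨h.1.symm, h.2.2, h.2.1⟩⟩
  loopless := ⟨fun a h => G.loopless.irrefl a h.1⟩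

/-- `G` is chordal: every cycle of length at least 4 has a chord, i.e. an edge
between two (necessarily non-consecutive) vertices of the cycle that is not an
edge of the cycle. -/
def Chordal {V : Type*} (G : SimpleGraph V) : Prop :=
  ∀ (v : V) (c : G.Walk v v), c.IsCycle → 4 ≤ c.length →
    ∃ u w, u ∈ c.support ∧ w ∈ c.support ∧ G.Adj u w ∧ s(u, w) ∉ c.edges

/-- `S` is (the node set of) a subtree of the rooted tree `T`. -/
def IsSubtree {N : ℕ} (T : RootedTree N) (S : Set (Fin N)) : Prop :=
  S.Nonempty ∧ ∃ top ∈ S, (∀ u ∈ S, T.Anc top u) ∧ ∀ u ∈ S, u ≠ top → T.parent u ∈ S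


section Stmt1Aux

variable {n : ℕ} (G : SimpleGraph (Fin n)) [DecidableRel G.Adj]

lemma matchedB_iff (M : List (Fin n × Fin n)) (v : Fin n) :
    matchedB M v = true ↔ ∃ e ∈ M, e.1 = v ∨ e.2 = v := by
  simp [matchedB, List.any_eq_true]

lemma matchedB_false_iff (M : List (Fin n × Fin n)) (v : Fin n) :
    matchedB M v = false ↔ ¬ ∃ e ∈ M, e.1 = v ∨ e.2 = v := by
  rw [← matchedB_iff]
  cases h : matchedB M v <;> simp

lemma mem_greedyStep {M : List (Fin n × Fin n)} {i : Fin n} {e} (h : e ∈ M) :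
    e ∈ greedyStep G M i := by
  unfold greedyStep; split_ifs <;> simp [h]

lemma greedyPrefix_succ {k : ℕ} (h : k < n) :
    greedyPrefix G (k + 1) = greedyStep G (greedyPrefix G k) ⟨k, h⟩ := by
  unfold greedyPrefix
  rw [List.take_succ, List.foldl_append]
  have hget : (List.finRange n)[k]? = some ⟨k, h⟩ := by
    rw [List.getElem?_eq_getElem (by simpa using h)]
    simp [List.getElem_finRange, Fin.cast]
  rw [hget]
  rfl

lemma greedyPrefix_stab {k : ℕ} (h : n ≤ k) : greedyPrefix G k = greedyPrefix G n := by
  unfold greedyPrefix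
  rw [List.take_of_length_le (by simpa using h), List.take_of_length_le (by simp)]

lemma greedyPrefix_mono {k k' : ℕ} (h : k ≤ k') {e} (he : e ∈ greedyPrefix G k) :
    e ∈ greedyPrefix G k' := by
  induction k', h using Nat.le_induction with
  | base => exact he
  | succ k' hk ih =>
    by_cases h' : k' < n
    · rw [greedyPrefix_succ G h']; exact mem_greedyStep G ih
    · rw [greedyPrefix_stab G (by omega), ← greedyPrefix_stab G (le_of_not_gt h')]; exact ih

lemma matchedB_mono {k k' : ℕ} (h : k ≤ k') {v} (hv : matchedB (greedyPrefix G k) v = true) :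
    matchedB (greedyPrefix G k') v = true := by
  obtain ⟨e, he, hc⟩ := (matchedB_iff _ _).1 hv
  exact (matchedB_iff _ _).2 ⟨e, greedyPrefix_mono G h he, hc⟩

/-- The key properties of a greedy edge: it joins adjacent vertices, goes from a
smaller to a larger index, and the larger endpoint is the minimal choice: every
smaller neighbour of `e.1` was already matched when `e.1` was processed. -/
def GoodEdge (e : Fin n × Fin n) : Prop :=
  G.Adj e.1 e.2 ∧ e.1 < e.2 ∧
    ∀ w, G.Adj e.1 w → w < e.2 → matchedB (greedyPrefix G e.1.val) w = true

theorem greedyInv (k : ℕ) :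
    (∀ e ∈ greedyPrefix G k, e.1.val < k ∧ GoodEdge G e) ∧
    (greedyPrefix G k).Pairwise
      (fun e f => e.1 ≠ f.1 ∧ e.1 ≠ f.2 ∧ e.2 ≠ f.1 ∧ e.2 ≠ f.2) ∧
    (∀ v : Fin n, v.val < k → matchedB (greedyPrefix G k) v = false →
      ∀ w, G.Adj v w → matchedB (greedyPrefix G k) w = true) := by
  induction k with
  | zero => simp [greedyPrefix]
  | succ k ih =>
    obtain ⟨ha, hb, hc⟩ := ih
    by_cases hk : k < n
    · rw [greedyPrefix_succ G hk]
      set j : Fin n := ⟨k, hk⟩ with hj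
      unfold greedyStep
      split_ifs with h1 h2
      · -- j already matched; nothing changes
        refine ⟨fun e he => ⟨Nat.lt_succ_of_lt (ha e he).1, (ha e he).2⟩, hb,
          fun v hv hvm w hw => ?_⟩
        by_cases hvk : v.val < k
        · exact hc v hvk hvm w hw
        · have hvj : v = j := Fin.ext (show (v : ℕ) = k by omega)
          rw [hvj] at hvm; rw [hvm] at h1; cases h1
      · -- new edge (j, m)
        have h1' : matchedB (greedyPrefix G k) j = false := by
          cases h : matchedB (greedyPrefix G k) j
          · rfl
          · exact absurd h h1
        set m := (Finset.univ.filter fun w => G.Adj j w ∧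
          matchedB (greedyPrefix G k) w = false).min' h2 with hm
        have hmmem := Finset.min'_mem _ h2
        rw [← hm] at hmmem
        have hmf := Finset.mem_filter.1 hmmem
        have hadj : G.Adj j m := hmf.2.1
        have hmun : matchedB (greedyPrefix G k) m = false := hmf.2.2
        have hjm : j < m := by
          rcases lt_trichotomy j m with h | h | h
          · exact h
          · exact absurd h hadj.ne
          · exfalso
            have hmk : (m : ℕ) < k := h
            have := hc m hmk hmun j hadj.symm
            rw [this] at h1'; cases h1'
        have hgood : GoodEdge G (j, m) := by
          refine ⟨hadj, hjm, fun w hw hwm => ?_⟩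
          cases hwmB : matchedB (greedyPrefix G ((j, m).1 : Fin n).val) w
          · exfalso
            have hwfil : w ∈ Finset.univ.filter fun w => G.Adj j w ∧
                matchedB (greedyPrefix G k) w = false := by
              refine Finset.mem_filter.2 ⟨Finset.mem_univ _, hw, ?_⟩
              exact hwmB
            have := Finset.min'_le _ _ hwfil
            rw [← hm] at this
            exact absurd hwm (not_lt.mpr this)
          · rfl
        refine ⟨?_, ?_, ?_⟩
        · intro e he
          rcases List.mem_cons.1 he with rfl | he'
          · exact ⟨Nat.lt_succ_self _, hgood⟩
          · exact ⟨Nat.lt_succ_of_lt (ha e he').1, (ha e he').2⟩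
        · refine List.pairwise_cons.2 ⟨fun f hf => ?_, hb⟩
          have hjn := (matchedB_false_iff _ _).1 h1'
          have hmn := (matchedB_false_iff _ _).1 hmun
          exact ⟨fun h => hjn ⟨f, hf, Or.inl h.symm⟩, fun h => hjn ⟨f, hf, Or.inr h.symm⟩,
            fun h => hmn ⟨f, hf, Or.inl h.symm⟩, fun h => hmn ⟨f, hf, Or.inr h.symm⟩⟩
        · intro v hv hvm w hw
          have hvm' : matchedB (greedyPrefix G k) v = false := by
            rw [matchedB_false_iff] at hvm ⊢
            exact fun ⟨e, he, hcov⟩ => hvm ⟨e, List.mem_cons_of_mem _ he, hcov⟩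
          by_cases hvk : v.val < k
          · have := hc v hvk hvm' w hw
            obtain ⟨e, he, hcov⟩ := (matchedB_iff _ _).1 this
            exact (matchedB_iff _ _).2 ⟨e, List.mem_cons_of_mem _ he, hcov⟩
          · exfalso
            have hvj : v = j := Fin.ext (show (v : ℕ) = k by omega)
            rw [matchedB_false_iff] at hvm
            exact hvm ⟨(j, m), List.mem_cons_self, Or.inl hvj.symm⟩
      · -- j unmatched, no available neighbour
        refine ⟨fun e he => ⟨Nat.lt_succ_of_lt (ha e he).1, (ha e he).2⟩, hb,
          fun v hv hvm w hw => ?_⟩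
        by_cases hvk : v.val < k
        · exact hc v hvk hvm w hw
        · have hvj : v = j := Fin.ext (show (v : ℕ) = k by omega)
          subst hvj
          cases hwB : matchedB (greedyPrefix G k) w
          · exact absurd ⟨w, Finset.mem_filter.2 ⟨Finset.mem_univ _, hw, hwB⟩⟩ h2
          · rfl
    · rw [greedyPrefix_stab G (by omega), ← greedyPrefix_stab G (le_of_not_gt hk)]
      refine ⟨fun e he => ⟨Nat.lt_succ_of_lt (ha e he).1, (ha e he).2⟩, hb, ?_⟩
      intro v hv hvm w hw
      exact hc v (by omega) hvm w hw

lemma cover_unique {e f : Fin n × Fin n} {v : Fin n}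
    (he : e ∈ greedyPrefix G n) (hf : f ∈ greedyPrefix G n)
    (hev : e.1 = v ∨ e.2 = v) (hfv : f.1 = v ∨ f.2 = v) : e = f := by
  by_contra hne
  have hsym : Symmetric (fun e f : Fin n × Fin n =>
      e.1 ≠ f.1 ∧ e.1 ≠ f.2 ∧ e.2 ≠ f.1 ∧ e.2 ≠ f.2) :=
    fun a b h => ⟨h.1.symm, h.2.2.1.symm, h.2.1.symm, h.2.2.2.symm⟩
  haveI : Std.Symm (fun e f : Fin n × Fin n =>
      e.1 ≠ f.1 ∧ e.1 ≠ f.2 ∧ e.2 ≠ f.1 ∧ e.2 ≠ f.2) := ⟨fun a b h => hsym h⟩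
  have hd := ((greedyInv G n).2.1.forall) he hf hne
  rcases hev with h | h <;> rcases hfv with h' | h' <;>
    [exact hd.1 (h.trans h'.symm); exact hd.2.1 (h.trans h'.symm);
     exact hd.2.2.1 (h.trans h'.symm); exact hd.2.2.2 (h.trans h'.symm)]

/-- Key lemma: if `i'` is a processed (`i' < j`), still-free vertex adjacent to the
currently processed vertex `j`, then the greedy matching contains an edge covering `j`
whose first endpoint is at most `i'`. -/
lemma keyS {k : ℕ} (hk : k < n) (j : Fin n) (hjk : (j : ℕ) = k) (i' : Fin n)
    (hi'k : (i' : ℕ) < k)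
    (huncov : ¬ ∃ e ∈ greedyPrefix G n, (e.1 = i' ∨ e.2 = i') ∧ (e.2 : ℕ) < k)
    (hadj : G.Adj i' j) :
    ∃ e ∈ greedyPrefix G n, (e.1 = j ∨ e.2 = j) ∧ (e.1 : ℕ) ≤ (i' : ℕ) := by
  by_cases hm : matchedB (greedyPrefix G n) i' = true
  · obtain ⟨f, hf, hcov⟩ := (matchedB_iff _ _).1 hm
    have hfk : ¬ (f.2 : ℕ) < k := fun h => huncov ⟨f, hf, hcov, h⟩
    have hgood := ((greedyInv G n).1 f hf).2
    have hf1 : f.1 = i' := by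
      rcases hcov with h | h
      · exact h
      · exact absurd (h ▸ hi'k) hfk
    by_cases hfj : f.2 = j
    · exact ⟨f, hf, Or.inr hfj, by rw [hf1]⟩
    · have hjf2 : j < f.2 := by
        rw [Fin.lt_def, hjk]
        rcases Nat.lt_or_ge k (f.2 : ℕ) with h | h
        · exact h
        · exfalso
          exact hfj (Fin.ext (by omega)).symm
      have hmj := hgood.2.2 j (by rw [hf1]; exact hadj.symm.symm) hjf2
      obtain ⟨e, he, hcov'⟩ := (matchedB_iff _ _).1 hmj
      have he1 : (e.1 : ℕ) < (f.1 : ℕ) := ((greedyInv G (f.1 : ℕ)).1 e he).1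
      refine ⟨e, greedyPrefix_mono G (le_of_lt f.1.isLt) he, hcov', ?_⟩
      rw [hf1] at he1; omega
  · have hm' : matchedB (greedyPrefix G n) i' = false := by
      cases h : matchedB (greedyPrefix G n) i'
      · rfl
      · exact absurd h hm
    have hm2 : matchedB (greedyPrefix G ((i' : ℕ) + 1)) i' = false := by
      cases h : matchedB (greedyPrefix G ((i' : ℕ) + 1)) i'
      · rfl
      · have := matchedB_mono G (show (i' : ℕ) + 1 ≤ n from i'.isLt) h
        rw [this] at hm'; cases hm'
    have hcj := (greedyInv G ((i' : ℕ) + 1)).2.2 i' (Nat.lt_succ_self _) hm2 j hadj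
    obtain ⟨e, he, hcov'⟩ := (matchedB_iff _ _).1 hcj
    have he1 : (e.1 : ℕ) < (i' : ℕ) + 1 := ((greedyInv G ((i' : ℕ) + 1)).1 e he).1
    exact ⟨e, greedyPrefix_mono G i'.isLt he, hcov', by omega⟩

/-- The state of the delayed greedy algorithm after `k` steps. -/
def dState (k : ℕ) : List (Fin n × Fin n) × Finset (Fin n) :=
  ((List.finRange n).take k).foldl (delayedStep G) ([], ∅)

lemma dState_succ {k : ℕ} (h : k < n) :
    dState G (k + 1) = delayedStep G (dState G k) ⟨k, h⟩ := by
  unfold dState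
  rw [List.take_succ, List.foldl_append]
  have hget : (List.finRange n)[k]? = some ⟨k, h⟩ := by
    rw [List.getElem?_eq_getElem (by simpa using h)]
    simp [List.getElem_finRange, Fin.cast]
  rw [hget]
  rfl

theorem delayedInv (k : ℕ) (hkn : k ≤ n) :
    (∀ e, e ∈ (dState G k).1 ↔ e ∈ greedyPrefix G n ∧ (e.2 : ℕ) < k) ∧
    (∀ v : Fin n, v ∈ (dState G k).2 ↔ (v : ℕ) < k ∧
      ¬ ∃ e ∈ greedyPrefix G n, (e.1 = v ∨ e.2 = v) ∧ (e.2 : ℕ) < k) := by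
  induction k with
  | zero =>
    constructor
    · intro e; simp [dState]
    · intro v; simp [dState]
  | succ k ih =>
    have hk : k < n := hkn
    obtain ⟨hD, hF⟩ := ih (le_of_lt hk)
    set j : Fin n := ⟨k, hk⟩ with hj
    rw [dState_succ G hk]
    unfold delayedStep
    by_cases hcase : ∃ e₀ ∈ greedyPrefix G n, e₀.2 = j
    · obtain ⟨e₀, he₀, he₀2⟩ := hcase
      have hgood := ((greedyInv G n).1 e₀ he₀).2
      have hij : e₀.1 < e₀.2 := hgood.2.1
      have hik : (e₀.1 : ℕ) < k := by
        have := Fin.lt_def.1 hij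
        rw [he₀2] at this
        exact this
      have hiF : e₀.1 ∈ (dState G k).2 := by
        refine (hF e₀.1).2 ⟨hik, ?_⟩
        rintro ⟨f, hf, hcov, hf2⟩
        have : f = e₀ := cover_unique G hf he₀ hcov (Or.inl rfl)
        rw [this, he₀2] at hf2
        simp [hj] at hf2
      have hiFj : e₀.1 ∈ (dState G k).2.filter (fun i' => G.Adj i' j) :=
        Finset.mem_filter.2 ⟨hiF, by rw [← he₀2]; exact hgood.1⟩
      have hne : ((dState G k).2.filter fun i' => G.Adj i' j).Nonempty := ⟨e₀.1, hiFj⟩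
      rw [dif_pos hne]
      have hmin : ((dState G k).2.filter fun i' => G.Adj i' j).min' hne = e₀.1 := by
        apply le_antisymm (Finset.min'_le _ _ hiFj)
        set i₀ := ((dState G k).2.filter fun i' => G.Adj i' j).min' hne with hi₀def
        have hi₀mem := Finset.min'_mem _ hne
        rw [← hi₀def] at hi₀mem
        have hi₀f := Finset.mem_filter.1 hi₀mem
        obtain ⟨hi₀k, hi₀un⟩ := (hF i₀).1 hi₀f.1
        obtain ⟨e, he, hcov, hle⟩ := keyS G hk j rfl i₀ hi₀k hi₀un hi₀f.2
        have : e = e₀ := cover_unique G he he₀ hcov (Or.inr he₀2)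
        rw [this] at hle
        exact Fin.le_def.2 hle
      rw [hmin]
      constructor
      · intro f
        simp only [List.mem_cons, hD]
        constructor
        · rintro (rfl | ⟨hf, hf2⟩)
          · have heq : (e₀.1, j) = e₀ := by rw [← he₀2]
            refine ⟨by rw [heq]; exact he₀, ?_⟩
            show (j : ℕ) < k + 1
            simp [hj]
          · exact ⟨hf, by omega⟩
        · rintro ⟨hf, hf2⟩
          by_cases h2 : (f.2 : ℕ) < k
          · exact Or.inr ⟨hf, h2⟩
          · have hfj : f.2 = j := Fin.ext (show (f.2 : ℕ) = k by omega)
            have hfe : f = e₀ := cover_unique G hf he₀ (Or.inr hfj) (Or.inr he₀2)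
            left
            rw [hfe, Prod.ext_iff]
            exact ⟨rfl, he₀2⟩
      · intro v
        rw [Finset.mem_erase, hF]
        constructor
        · rintro ⟨hvi, hvk, hvun⟩
          refine ⟨by omega, ?_⟩
          rintro ⟨f, hf, hcov, hf2⟩
          by_cases h2 : (f.2 : ℕ) < k
          · exact hvun ⟨f, hf, hcov, h2⟩
          · have hfj : f.2 = j := Fin.ext (show (f.2 : ℕ) = k by omega)
            have hfe : f = e₀ := cover_unique G hf he₀ (Or.inr hfj) (Or.inr he₀2)
            rcases hcov with h | h
            · exact hvi (h.symm.trans (by rw [hfe]))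
            · rw [hfe, he₀2] at h
              rw [← h] at hvk
              simp [hj] at hvk
        · rintro ⟨hvk1, hvun⟩
          have hvj : (v : ℕ) ≠ k := by
            intro h
            exact hvun ⟨e₀, he₀, Or.inr (he₀2.trans (Fin.ext h.symm)),
              by rw [he₀2]; simp [hj]⟩
          have hvi : v ≠ e₀.1 := by
            intro h
            exact hvun ⟨e₀, he₀, Or.inl h.symm, by rw [he₀2]; simp [hj]⟩
          exact ⟨hvi, by omega, fun ⟨f, hf, hcov, hf2⟩ => hvun ⟨f, hf, hcov, by omega⟩⟩
    · have hFe : ¬ ((dState G k).2.filter fun i' => G.Adj i' j).Nonempty := by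
        rintro ⟨i₀, hi₀⟩
        have hi₀f := Finset.mem_filter.1 hi₀
        obtain ⟨hi₀k, hi₀un⟩ := (hF i₀).1 hi₀f.1
        obtain ⟨e, he, hcov, hle⟩ := keyS G hk j rfl i₀ hi₀k hi₀un hi₀f.2
        rcases hcov with h | h
        · have : (e.1 : ℕ) = k := by rw [h]
          omega
        · exact hcase ⟨e, he, h⟩
      rw [dif_neg hFe]
      constructor
      · intro f
        rw [hD]
        constructor
        · rintro ⟨hf, h2⟩; exact ⟨hf, by omega⟩
        · rintro ⟨hf, h2⟩
          refine ⟨hf, ?_⟩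
          by_contra h'
          exact hcase ⟨f, hf, Fin.ext (show (f.2 : ℕ) = k by omega)⟩
      · intro v
        rw [Finset.mem_insert, hF]
        constructor
        · rintro (rfl | ⟨hvk, hvun⟩)
          · refine ⟨by simp [hj], ?_⟩
            rintro ⟨f, hf, hcov, h2⟩
            rcases hcov with h | h
            · have hlt := Fin.lt_def.1 (((greedyInv G n).1 f hf).2.2.1)
              rw [h] at hlt
              simp only [hj] at hlt h2
              omega
            · exact hcase ⟨f, hf, h⟩
          · refine ⟨by omega, ?_⟩
            rintro ⟨f, hf, hcov, h2⟩
            refine hvun ⟨f, hf, hcov, ?_⟩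
            by_contra h'
            exact hcase ⟨f, hf, Fin.ext (show (f.2 : ℕ) = k by omega)⟩
        · rintro ⟨hvk1, hvun⟩
          by_cases hv : (v : ℕ) = k
          · exact Or.inl (Fin.ext hv)
          · exact Or.inr ⟨by omega, fun ⟨f, hf, hcov, hf2⟩ => hvun ⟨f, hf, hcov, by omega⟩⟩

end Stmt1Aux

/-- The greedy algorithm and the delayed greedy algorithm produce the
same matching on any graph with any fixed vertex order. -/
theorem stmt1 {n : ℕ} (G : SimpleGraph (Fin n)) [DecidableRel G.Adj] :
    (greedy G).toFinset = (delayedGreedy G).toFinset := by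
  have h1 : greedy G = greedyPrefix G n := by
    unfold greedy greedyPrefix
    rw [List.take_of_length_le (by simp)]
  have h2 : delayedGreedy G = (dState G n).1 := by
    unfold delayedGreedy dState
    rw [List.take_of_length_le (by simp)]
  ext e
  simp only [List.mem_toFinset, h1, h2]
  rw [(delayedInv G n le_rfl).1 e]
  exact ⟨fun h => ⟨h, e.2.isLt⟩, And.left⟩
end Paper
end

section
/- Let G be a graph with an RDV representation on a rooted tree T whose nodes are assigned coordinates: x(i) is the index of the leftmost leaf descendant of node i in a fixed left-to-right leaf order, and y(i) is the depth of i. For each vertex v define the horizontal segment s(v) from (x(t(v)), y(t(v))) to (x(r(t(v))), y(t(v))), where r(t(v)) is the rightmost leaf descendant of t(v), and the vertical segment q(v) from (x(b(v)), y(t(v))) to (x(b(v)), y(b(v))). Then for i < j in a bottom-up enumeration, (v_i,v_j) is an edge of G if and only if q(v_j) intersects s(v_i). -/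
namespace Paper

section AncLemmas
variable {N : ℕ} (T : RootedTree N)

lemma anc_refl (u : Fin N) : T.Anc u u := ⟨0, rfl⟩

lemma anc_trans {u w z : Fin N} (h1 : T.Anc u w) (h2 : T.Anc w z) : T.Anc u z := by
  obtain ⟨k, hk⟩ := h1; obtain ⟨m, hm⟩ := h2
  exact ⟨k + m, by rw [Function.iterate_add_apply, hm, hk]⟩

lemma depth_parent_le (i : Fin N) : T.depth (T.parent i) ≤ T.depth i := by
  by_cases h : i = T.root
  · rw [h, T.parent_root]
  · have := T.depth_parent i h; omega

lemma depth_iterate_le (k : ℕ) (i : Fin N) : T.depth (T.parent^[k] i) ≤ T.depth i := by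
  induction k generalizing i with
  | zero => simp
  | succ k ih =>
    rw [Function.iterate_succ_apply]
    exact (ih _).trans (depth_parent_le T i)

lemma anc_depth_le {u w : Fin N} (h : T.Anc u w) : T.depth u ≤ T.depth w := by
  obtain ⟨k, hk⟩ := h; rw [← hk]; exact depth_iterate_le T k w

lemma iterate_eq_self_of_depth_le (k : ℕ) (i : Fin N)
    (h : T.depth i ≤ T.depth (T.parent^[k] i)) : T.parent^[k] i = i := by
  induction k generalizing i with
  | zero => rfl
  | succ k ih =>
    rw [Function.iterate_succ_apply] at h ⊢
    by_cases hr : i = T.root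
    · have hp : T.parent i = i := by rw [hr]; exact T.parent_root
      rw [hp] at h ⊢; exact ih i h
    · have h1 := T.depth_parent i hr
      have h2 := depth_iterate_le T k (T.parent i)
      omega

lemma anc_antisymm {u w : Fin N} (h1 : T.Anc u w) (h2 : T.depth w ≤ T.depth u) :
    u = w := by
  obtain ⟨k, hk⟩ := h1; rw [← hk] at h2 ⊢
  exact iterate_eq_self_of_depth_le T k w h2

lemma anc_comparable {u u' w : Fin N} (h1 : T.Anc u w) (h2 : T.Anc u' w) :
    T.Anc u u' ∨ T.Anc u' u := by
  obtain ⟨k, hk⟩ := h1; obtain ⟨m, hm⟩ := h2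
  rcases le_total k m with h | h
  · right
    exact ⟨m - k, by rw [← hk, ← Function.iterate_add_apply,
      Nat.sub_add_cancel h, hm]⟩
  · left
    exact ⟨k - m, by rw [← hm, ← Function.iterate_add_apply,
      Nat.sub_add_cancel h, hk]⟩

end AncLemmas

/-- With planar coordinates, for `i < j` in a bottom-up enumeration,
`(v_i, v_j)` is an edge iff the vertical segment `q(v_j)` intersects the horizontal
segment `s(v_i)`, i.e. iff `x(t(v_i)) ≤ x(b(v_j)) ≤ x(r(t(v_i)))` and
`y(t(v_j)) ≤ y(t(v_i)) ≤ y(b(v_j))`. -/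
theorem stmt3 {N n : ℕ} (G : SimpleGraph (Fin n)) (R : RDVData N n)
    (P : PlanarCoords R.T) (hrep : R.IsRep G) (hbu : R.BottomUp) :
    ∀ i j : Fin n, i < j →
      (G.Adj i j ↔
        P.x (R.t i) ≤ P.x (R.b j) ∧ P.x (R.b j) ≤ P.idx (P.rmost (R.t i)) ∧
          R.T.depth (R.t j) ≤ R.T.depth (R.t i) ∧
          R.T.depth (R.t i) ≤ R.T.depth (R.b j)) := by
  intro i j hij
  have hne : i ≠ j := ne_of_lt hij
  rw [hrep i j hne]
  constructor
  · rintro ⟨m, ⟨hi1, hi2⟩, ⟨hj1, hj2⟩⟩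
    have hanc : R.T.Anc (R.t i) (R.b j) := anc_trans R.T hi1 hj2
    refine ⟨?_, ?_, hbu i j hij.le, anc_depth_le R.T hanc⟩
    · exact P.lmost_min _ _ (P.lmost_leaf _) (anc_trans R.T hanc (P.lmost_desc _))
    · exact P.rmost_max _ _ (P.lmost_leaf _) (anc_trans R.T hanc (P.lmost_desc _))
  · rintro ⟨hx1, hx2, hd1, hd2⟩
    have hleaf : R.T.Anc (R.t i) (P.lmost (R.b j)) :=
      P.contiguous _ _ _ _ (P.lmost_leaf _) (P.rmost_leaf _) (P.lmost_leaf _)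
        (P.lmost_desc _) (P.rmost_desc _) hx1 hx2
    have hanc : R.T.Anc (R.t i) (R.b j) := by
      rcases anc_comparable R.T hleaf (P.lmost_desc (R.b j)) with h | h
      · exact h
      · have e : R.b j = R.t i := anc_antisymm R.T h hd2
        rw [e]; exact anc_refl R.T _
    have htj : R.T.Anc (R.t j) (R.t i) := by
      rcases anc_comparable R.T hanc (R.downward j) with h | h
      · have heq : R.t i = R.t j := anc_antisymm R.T h hd1
        rw [heq]; exact anc_refl R.T _
      · exact h
    exact ⟨R.t i, ⟨anc_refl R.T _, R.downward i⟩, ⟨htj, hanc⟩⟩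
end Paper
end

section
/- Let G be a graph with an RDV representation on a rooted tree T, and let v_1,...,v_n be a bottom-up enumeration. Then for every i, the vertex v_i is a simple vertex of the subgraph of G induced by {v_i, v_{i+1}, ..., v_n}. -/
namespace Paper

section Aux

namespace RootedTree

variable {N : ℕ} (T : RootedTree N)

theorem eq_root_of_depth_eq_zero {u : Fin N} (h : T.depth u = 0) : u = T.root := by
  by_contra hu
  have := T.depth_parent u hu
  omega

theorem depth_iterate (k : ℕ) (u : Fin N) :
    T.depth (T.parent^[k] u) = T.depth u - min k (T.depth u) := by
  induction k with
  | zero => simp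
  | succ k ih =>
    rw [Function.iterate_succ_apply']
    by_cases h : T.parent^[k] u = T.root
    · rw [h] at ih ⊢
      rw [T.parent_root]
      rw [T.depth_root] at ih ⊢
      omega
    · have := T.depth_parent _ h
      omega

theorem anc_refl (u : Fin N) : T.Anc u u := ⟨0, rfl⟩

theorem anc_trans {a b c : Fin N} (h1 : T.Anc a b) (h2 : T.Anc b c) : T.Anc a c := by
  obtain ⟨k, hk⟩ := h1; obtain ⟨m, hm⟩ := h2
  exact ⟨k + m, by rw [Function.iterate_add_apply, hm, hk]⟩

theorem anc_depth_le {a b : Fin N} (h : T.Anc a b) : T.depth a ≤ T.depth b := by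
  obtain ⟨k, hk⟩ := h
  have := T.depth_iterate k b
  rw [hk] at this
  omega

theorem anc_of_common {a b c : Fin N} (h1 : T.Anc a c) (h2 : T.Anc b c)
    (hd : T.depth a ≤ T.depth b) : T.Anc a b := by
  obtain ⟨k, hk⟩ := h1; obtain ⟨m, hm⟩ := h2
  have hik := T.depth_iterate k c
  have him := T.depth_iterate m c
  rw [hk] at hik; rw [hm] at him
  rcases le_or_gt m k with h | h
  · refine ⟨k - m, ?_⟩
    rw [← hm, ← Function.iterate_add_apply, Nat.sub_add_cancel h]
    exact hk
  · have ha0 : T.depth a = 0 := by omega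
    have hb0 : T.depth b = 0 := by omega
    rw [T.eq_root_of_depth_eq_zero ha0, T.eq_root_of_depth_eq_zero hb0]
    exact T.anc_refl _

end RootedTree

theorem chain'_mono_of_mem {α : Type*} {P : α → Prop} {r s : α → α → Prop}
    (h : ∀ a b, P a → P b → r a b → s a b) :
    ∀ l : List α, (∀ x ∈ l, P x) → l.Chain' r → l.Chain' s
  | [], _, _ => List.isChain_nil
  | [a], _, _ => List.isChain_singleton a
  | a :: b :: l, hmem, hc => by
    rw [List.Chain', List.isChain_cons_cons] at hc ⊢
    exact ⟨h a b (hmem a (by simp)) (hmem b (by simp)) hc.1,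
      chain'_mono_of_mem h (b :: l) (fun x hx => hmem x (List.mem_cons_of_mem _ hx)) hc.2⟩

end Aux

/-- In an RDV representation with a bottom-up enumeration, every `v_i`
is a simple vertex of the subgraph induced by `{v_i, v_{i+1}, …, v_n}`. -/
theorem stmt12 {N n : ℕ} (G : SimpleGraph (Fin n)) (R : RDVData N n)
    (hrep : R.IsRep G) (hbu : R.BottomUp) :
    ∀ i : Fin n, IsSimpleVx (tailGraph G i) i := by
  classical
  intro i
  set H := tailGraph G i with hHdef
  have hmem : ∀ w, w ∈ closedNbr H i → i ≤ w ∧ R.onPath w (R.t i) := by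
    intro w hw
    rw [closedNbr, Set.mem_insert_iff] at hw
    rcases hw with rfl | hw
    · exact ⟨le_refl _, R.T.anc_refl _, R.downward w⟩
    · obtain ⟨hG, hii, hiw⟩ := hw
      have hne : i ≠ w := hG.ne
      obtain ⟨u, ⟨hti_u, hu_bi⟩, ⟨htw_u, hu_bw⟩⟩ := (hrep i w hne).mp hG
      have hd : R.T.depth (R.t w) ≤ R.T.depth (R.t i) := hbu i w hiw
      exact ⟨hiw, R.T.anc_of_common htw_u hti_u hd, R.T.anc_trans hti_u hu_bw⟩
  have hadj : ∀ a ∈ closedNbr H i, ∀ b ∈ closedNbr H i, a ≠ b → H.Adj a b := by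
    intro a ha b hb hab
    obtain ⟨hia, hpa⟩ := hmem a ha
    obtain ⟨hib, hpb⟩ := hmem b hb
    exact ⟨(hrep a b hab).mpr ⟨R.t i, hpa, hpb⟩, hia, hib⟩
  have hsub : ∀ a ∈ closedNbr H i, ∀ b ∈ closedNbr H i,
      R.T.depth (R.t b) ≤ R.T.depth (R.t a) → closedNbr H a ⊆ closedNbr H b := by
    intro a ha b hb hdep z hz
    by_cases hzb : z = b
    · subst hzb; exact Set.mem_insert _ _
    rw [closedNbr, Set.mem_insert_iff] at hz
    refine Set.mem_insert_iff.mpr (Or.inr ?_)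
    show H.Adj b z
    rcases hz with rfl | hz
    · exact hadj b hb z ha (fun h => hzb h.symm)
    · obtain ⟨hGaz, hia', hiz⟩ := hz
      have haz : a ≠ z := hGaz.ne
      obtain ⟨u, ⟨hta_u, hu_ba⟩, ⟨htz_u, hu_bz⟩⟩ := (hrep a z haz).mp hGaz
      obtain ⟨hia, hpa⟩ := hmem a ha
      obtain ⟨hib, hpb⟩ := hmem b hb
      have hbz : b ≠ z := fun h => hzb h.symm
      have hGbz : G.Adj b z := by
        rcases le_or_gt (R.T.depth (R.t i)) (R.T.depth u) with hcase | hcase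
        · -- t_i is an ancestor of u, hence on P(z)
          have h1 : R.T.Anc (R.t i) u := R.T.anc_of_common hpa.2 hu_ba hcase
          have h2 : R.T.Anc (R.t z) (R.t i) :=
            R.T.anc_of_common htz_u h1 (hbu i z hiz)
          exact (hrep b z hbz).mpr ⟨R.t i, hpb, h2, R.T.anc_trans h1 hu_bz⟩
        · -- u is a strict ancestor of t_i, hence on P(b)
          have h1 : R.T.Anc u (R.t i) := R.T.anc_of_common hu_ba hpa.2 hcase.le
          have hd : R.T.depth (R.t b) ≤ R.T.depth u :=
            le_trans hdep (le_trans (R.T.anc_depth_le hta_u) (le_refl _))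
          have h2 : R.T.Anc (R.t b) u := R.T.anc_of_common hpb.1 h1 hd
          exact (hrep b z hbz).mpr ⟨u, ⟨h2, R.T.anc_trans h1 hpb.2⟩, htz_u, hu_bz⟩
      exact ⟨hGbz, hib, hiz⟩
  -- the sorted list
  let r : Fin n → Fin n → Prop := fun a b => R.T.depth (R.t b) ≤ R.T.depth (R.t a)
  haveI : DecidableRel r := fun a b => Nat.decLe _ _
  haveI hrt : IsTotal (Fin n) r := ⟨fun a b => le_total _ _⟩
  haveI hrtr : IsTrans (Fin n) r := ⟨fun a b c h1 h2 => le_trans h2 h1⟩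
  let l0 : List (Fin n) := (Finset.univ.filter (fun w => w ∈ closedNbr H i)).toList
  let l : List (Fin n) := List.insertionSort r l0
  have hl0 : ∀ w, w ∈ l0 ↔ w ∈ closedNbr H i := by
    intro w
    simp [l0, Finset.mem_toList]
  have hlmem : ∀ w, w ∈ l ↔ w ∈ closedNbr H i := by
    intro w
    rw [(List.perm_insertionSort r l0).mem_iff]
    exact hl0 w
  refine ⟨fun a ha b hb hab => hadj a ha b hb hab, l, hlmem, ?_⟩
  have hsorted : List.Pairwise r l := List.pairwise_insertionSort r l0
  exact chain'_mono_of_mem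
    (fun a b hpa hpb hr => hsub a hpa b hpb hr) l
    (fun x hx => (hlmem x).mp hx) hsorted.isChain

end Paper
end
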